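/- For 0 < p < 1/2 and ε > 0, the difference of log-importances satisfies L(p) − L(p + ε(1−2p)) ≥ 0, and moreover exp(L(p + ε(1−2p))) + exp(L(1 − p − ε(1−2p))) ≤ exp(L(p)) + exp(L(1−p)), i.e., the NMIM of the BSC output Bernoulli distribution is at most the NMIM of the input Bernoulli(p) distribution, provided p + ε(1−2p) ≤ 1/2. -/

import Mathlib

open Real

private lemma bsc_f_anti :
    StrictAntiOn (fun t : ℝ => t * Real.exp ((1 - t) / t) + (1 - t) * Real.exp (t / (1 - t)))
      (Set.Ioc (0 : ℝ) (1 / 2)) := by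
  apply strictAntiOn_of_deriv_neg (convex_Ioc _ _)
  · apply ContinuousOn.add
    · exact continuousOn_id.mul
        (((continuousOn_const.sub continuousOn_id).div continuousOn_id
          (fun x hx => ne_of_gt hx.1)).rexp)
    · refine (continuousOn_const.sub continuousOn_id).mul
        ((continuousOn_id.div (continuousOn_const.sub continuousOn_id)
          (fun x hx => ?_)).rexp)
      have : (x : ℝ) ≤ 1 / 2 := hx.2
      simp only [Set.mem_Ioc] at hx
      norm_num; linarith
  · intro x hx
    rw [interior_Ioc] at hx
    obtain ⟨hx0, hx2⟩ := hx
    have hx1 : x < 1 - x := by linarith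
    have h1x : (0 : ℝ) < 1 - x := by linarith
    -- derivative of first term
    have d1 : HasDerivAt (fun t : ℝ => (1 - t) / t) (((0 - 1) * x - (1 - x) * 1) / x ^ 2) x :=
      ((hasDerivAt_const x 1).sub (hasDerivAt_id x)).div (hasDerivAt_id x) hx0.ne'
    have d2 : HasDerivAt (fun t : ℝ => t * Real.exp ((1 - t) / t))
        (1 * Real.exp ((1 - x) / x) +
          x * (Real.exp ((1 - x) / x) * (((0 - 1) * x - (1 - x) * 1) / x ^ 2))) x :=
      (hasDerivAt_id x).mul d1.exp
    have d3 : HasDerivAt (fun t : ℝ => t / (1 - t))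
        ((1 * (1 - x) - x * (0 - 1)) / (1 - x) ^ 2) x :=
      (hasDerivAt_id x).div ((hasDerivAt_const x 1).sub (hasDerivAt_id x)) h1x.ne'
    have d4 : HasDerivAt (fun t : ℝ => (1 - t) * Real.exp (t / (1 - t)))
        ((0 - 1) * Real.exp (x / (1 - x)) +
          (1 - x) * (Real.exp (x / (1 - x)) * ((1 * (1 - x) - x * (0 - 1)) / (1 - x) ^ 2))) x :=
      ((hasDerivAt_const x 1).sub (hasDerivAt_id x)).mul d3.exp
    have d5 := d2.add d4
    rw [show deriv (fun t : ℝ => t * Real.exp ((1 - t) / t) + (1 - t) * Real.exp (t / (1 - t))) x = _ from d5.deriv]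
    have key : 1 * Real.exp ((1 - x) / x) +
          x * (Real.exp ((1 - x) / x) * (((0 - 1) * x - (1 - x) * 1) / x ^ 2)) +
        ((0 - 1) * Real.exp (x / (1 - x)) +
          (1 - x) * (Real.exp (x / (1 - x)) * ((1 * (1 - x) - x * (0 - 1)) / (1 - x) ^ 2))) =
        x / (1 - x) * Real.exp (x / (1 - x)) - (1 - x) / x * Real.exp ((1 - x) / x) := by
      field_simp
      ring
    rw [key]
    have hb : x / (1 - x) < 1 := by
      rw [div_lt_one h1x]; linarith
    have ha : 1 < (1 - x) / x := by
      rw [lt_div_iff₀ hx0]; linarith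
    have hab : x / (1 - x) < (1 - x) / x := lt_trans hb ha
    have heb : Real.exp (x / (1 - x)) < Real.exp ((1 - x) / x) := Real.exp_lt_exp.2 hab
    have hbpos : 0 < x / (1 - x) := div_pos hx0 h1x
    nlinarith [Real.exp_pos (x / (1 - x)), Real.exp_pos ((1 - x) / x),
      mul_lt_mul_of_pos_left heb hbpos]

theorem bsc_nmim_decrease (p ε : ℝ) (hp0 : 0 < p) (hp : p < 1 / 2)
    (hε : 0 < ε) (hq : p + ε * (1 - 2 * p) ≤ 1 / 2) :
    let L : ℝ → ℝ := fun x => Real.log (x * Real.exp ((1 - x) / x))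
    let q : ℝ := p + ε * (1 - 2 * p)
    0 ≤ L p - L q ∧
    Real.exp (L q) + Real.exp (L (1 - q)) ≤
      Real.exp (L p) + Real.exp (L (1 - p)) := by
  intro L q
  have hq0 : 0 < q := by
    have : 0 < ε * (1 - 2 * p) := by nlinarith
    simp only [q]; linarith
  have hpq : p < q := by
    have : 0 < ε * (1 - 2 * p) := by nlinarith
    simp only [q]; linarith
  have hq2 : q ≤ 1 / 2 := hq
  have h1q : 0 < 1 - q := by unfold q; linarith
  have h1p : 0 < 1 - p := by linarith
  have hLdef : ∀ x : ℝ, 0 < x → L x = Real.log x + (1 - x) / x := by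
    intro x hx
    simp only [L]
    rw [Real.log_mul hx.ne' (Real.exp_pos _).ne', Real.log_exp]
  constructor
  · rw [hLdef p hp0, hLdef q hq0]
    have hlog : Real.log (q / p) ≤ q / p - 1 :=
      Real.log_le_sub_one_of_pos (div_pos hq0 hp0)
    rw [Real.log_div hq0.ne' hp0.ne'] at hlog
    have h1 : (1 - p) / p = 1 / p - 1 := by field_simp
    have h2 : (1 - q) / q = 1 / q - 1 := by field_simp
    rw [h1, h2]
    have hdiff : (1 / p - 1 / q) - (q / p - 1) = (q - p) * (1 - q) / (p * q) := by
      field_simp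
    have hpos : 0 ≤ (q - p) * (1 - q) / (p * q) :=
      div_nonneg (by nlinarith) (by positivity)
    linarith [hlog]
  · have hexp : ∀ x : ℝ, 0 < x → Real.exp (L x) = x * Real.exp ((1 - x) / x) := by
      intro x hx
      simp only [L]
      rw [Real.exp_log (by positivity)]
    rw [hexp q hq0, hexp p hp0, hexp (1 - q) h1q, hexp (1 - p) h1p]
    have e1 : (1 - (1 - q)) / (1 - q) = q / (1 - q) := by ring_nf
    have e2 : (1 - (1 - p)) / (1 - p) = p / (1 - p) := by ring_nf
    rw [e1, e2]
    have := (bsc_f_anti ⟨hp0, hp.le⟩ ⟨hq0, hq⟩ hpq).le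
    simpa using this
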